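/- Let X = {x_1, …, x_{2k+2}} be a subset of the circle S¹ (with geodesic metric, total length 2π) listed in cyclic order, and suppose t_b(X) < t_d(X). Then t_b(X) ≥ kπ/(k+1). -/

import Mathlib

/-- The largest distance from `x` to any point of `X`. -/
noncomputable def ptTd (X : Type*) [MetricSpace X] (x : X) : ℝ :=
  sSup (Set.range fun y => dist x y)

/-- The second largest distance (counted with multiplicity over points) from `x`
to points of `X`. -/
noncomputable def ptTb (X : Type*) [MetricSpace X] (x : X) : ℝ :=
  sSup {r : ℝ | ∃ y z : X, y ≠ z ∧ r = min (dist x y) (dist x z)}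

/-- `t_b(X) = max_{x ∈ X} t_b(x)`. -/
noncomputable def tbX (X : Type*) [MetricSpace X] : ℝ :=
  sSup (Set.range (ptTb X))

/-- `t_d(X) = min_{x ∈ X} t_d(x)`. -/
noncomputable def tdX (X : Type*) [MetricSpace X] : ℝ :=
  sInf (Set.range (ptTd X))

set_option maxHeartbeats 4000000

lemma hT2pi : (0:ℝ) < 2 * Real.pi := by positivity
instance : Fact ((0:ℝ) < 2 * Real.pi) := ⟨hT2pi⟩

lemma norm_mk_of_mem' {δ : ℝ} (h0 : 0 ≤ δ) (h1 : δ ≤ 2*Real.pi) :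
    ‖(δ : AddCircle (2*Real.pi))‖ = min δ (2*Real.pi - δ) := by
  rcases le_or_gt (2*δ) (2*Real.pi) with hc | hc
  · rw [min_eq_left (by linarith)]
    have : ‖(δ : AddCircle (2*Real.pi))‖ = |δ| := by
      rw [AddCircle.norm_coe_eq_abs_iff _ hT2pi.ne']
      rw [abs_of_nonneg h0, abs_of_pos hT2pi]; linarith
    rw [this, abs_of_nonneg h0]
  · rw [min_eq_right (by linarith)]
    have hmk : (δ : AddCircle (2*Real.pi)) = ((δ - 2*Real.pi : ℝ) : AddCircle (2*Real.pi)) := by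
      rw [QuotientAddGroup.mk_sub,
        (QuotientAddGroup.eq_zero_iff _).2 (AddSubgroup.mem_zmultiples (2*Real.pi)), sub_zero]
    have : ‖((δ - 2*Real.pi:ℝ) : AddCircle (2*Real.pi))‖ = |δ - 2*Real.pi| := by
      rw [AddCircle.norm_coe_eq_abs_iff _ hT2pi.ne']
      rw [abs_of_nonpos (by linarith), abs_of_pos hT2pi]; linarith
    rw [hmk, this, abs_of_nonpos (by linarith)]; ring

lemma dist_mk' (a b : ℝ) (h0 : a ≤ b) (h1 : b ≤ a + 2*Real.pi) :
    dist ((a : AddCircle (2*Real.pi))) (b : AddCircle (2*Real.pi))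
      = min (b - a) (2*Real.pi - (b - a)) := by
  rw [dist_eq_norm, ← norm_neg, ← norm_mk_of_mem' (by linarith) (by linarith : b - a ≤ 2*Real.pi)]
  congr 1
  rw [← QuotientAddGroup.mk_sub, ← QuotientAddGroup.mk_neg]
  congr 1; ring

/-- For a subset `X` of the circle (circumference `2π`, geodesic metric) with `2k+2`
points and `t_b(X) < t_d(X)`, one has `t_b(X) ≥ kπ/(k+1)`. -/
theorem tbX_ge_of_circle (k : ℕ) (hk : 1 ≤ k)
    (s : Finset (AddCircle (2 * Real.pi))) (hcard : s.card = 2 * k + 2)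
    (h : tbX ↥s < tdX ↥s) :
    (k : ℝ) * Real.pi / (k + 1) ≤ tbX ↥s := by
  set tb := tbX ↥s with htb
  have hsne : s.Nonempty := Finset.card_pos.mp (by omega)
  haveI : Nonempty ↥s := ⟨⟨hsne.choose, hsne.choose_spec⟩⟩
  -- min of two distances ≤ tb
  have hmin : ∀ x ∈ s, ∀ y ∈ s, ∀ z ∈ s, y ≠ z →
      min (dist x y) (dist x z) ≤ tb := by
    intro x hx y hy z hz hyz
    have h1 : min (dist x y) (dist x z) ∈
        {r : ℝ | ∃ y' z' : ↥s, y' ≠ z' ∧ r = min (dist (⟨x, hx⟩ : ↥s) y') (dist (⟨x, hx⟩ : ↥s) z')} :=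
      ⟨⟨y, hy⟩, ⟨z, hz⟩, by simpa using hyz, by rw [Subtype.dist_eq, Subtype.dist_eq]⟩
    have hfin : {r : ℝ | ∃ y' z' : ↥s, y' ≠ z' ∧ r = min (dist (⟨x, hx⟩ : ↥s) y') (dist (⟨x, hx⟩ : ↥s) z')}.Finite := by
      apply Set.Finite.subset (Set.finite_range
        (fun p : ↥s × ↥s => min (dist (⟨x, hx⟩ : ↥s) p.1) (dist (⟨x, hx⟩ : ↥s) p.2)))
      rintro r ⟨y', z', _, rfl⟩; exact ⟨(y', z'), rfl⟩
    calc min (dist x y) (dist x z) ≤ ptTb ↥s ⟨x, hx⟩ := le_csSup hfin.bddAbove h1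
      _ ≤ tb := le_csSup (Set.finite_range _).bddAbove ⟨⟨x, hx⟩, rfl⟩
  -- existence of a far point
  have hfar : ∀ x ∈ s, ∃ y ∈ s, tb < dist x y := by
    intro x hx
    have h1 : tdX ↥s ≤ ptTd ↥s ⟨x, hx⟩ :=
      csInf_le (Set.finite_range _).bddBelow ⟨⟨x, hx⟩, rfl⟩
    have h2 : sSup (Set.range fun y : ↥s => dist (⟨x, hx⟩ : ↥s) y) ∈
        Set.range fun y : ↥s => dist (⟨x, hx⟩ : ↥s) y :=
      (Set.range_nonempty _).csSup_mem (Set.finite_range _)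
    obtain ⟨y, hy⟩ := h2
    refine ⟨(y : AddCircle (2*Real.pi)), y.2, ?_⟩
    have h3 : tb < dist (⟨x, hx⟩ : ↥s) y := by
      have : tb < ptTd ↥s ⟨x, hx⟩ := lt_of_lt_of_le h h1
      rw [ptTd, ← hy] at this; exact this
    rwa [Subtype.dist_eq] at h3
  have htb0 : 0 ≤ tb := by
    obtain ⟨x, hx, y, hy, hxy⟩ := Finset.one_lt_card.mp (show 1 < s.card by omega)
    have := hmin x hx x hx y hy (fun hc => hxy (by simpa using hc))
    rw [dist_self, min_eq_left dist_nonneg] at this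
    linarith
  clear htb
  -- chunk B : representatives
  haveI : Fact ((0:ℝ) < 2 * Real.pi) := ⟨by positivity⟩
  set nn : ℕ := 2 * k + 2 with hnn
  have hnn0 : 0 < (nn:ℤ) := by positivity
  set rep : AddCircle (2*Real.pi) → ℝ := fun q => ((AddCircle.equivIco (2*Real.pi) 0 q : ℝ)) with hrepdef
  have hrep_mem : ∀ q, rep q ∈ Set.Ico (0:ℝ) (2*Real.pi) := fun q => by
    have := (AddCircle.equivIco (2*Real.pi) 0 q).2; simpa using this
  have hrep_mk : ∀ q, ((rep q : ℝ) : AddCircle (2*Real.pi)) = q := fun q =>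
    (AddCircle.equivIco (2*Real.pi) 0).symm_apply_apply q
  have hrep_inj : Function.Injective rep := fun a b hab => by
    rw [← hrep_mk a, ← hrep_mk b, hab]
  have htcard : (s.image rep).card = nn := by
    rw [Finset.card_image_of_injective _ hrep_inj, hcard]
  set V : Fin nn → ℝ := fun i => (s.image rep).orderEmbOfFin htcard i with hVdef
  have hVmono : StrictMono V := ((s.image rep).orderEmbOfFin htcard).strictMono
  have hV_im : ∀ i, ∃ q ∈ s, rep q = V i := fun i => by
    exact Finset.mem_image.mp (Finset.orderEmbOfFin_mem (s.image rep) htcard i)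
  have hV_Ico : ∀ i, V i ∈ Set.Ico (0:ℝ) (2*Real.pi) := fun i => by
    obtain ⟨q, _, hq⟩ := hV_im i; rw [← hq]; exact hrep_mem q
  have hV_mem : ∀ i, ((V i : ℝ) : AddCircle (2*Real.pi)) ∈ s := fun i => by
    obtain ⟨q, hqs, hq⟩ := hV_im i; rw [← hq, hrep_mk]; exact hqs
  have hV_surj : ∀ q ∈ s, ∃ i, V i = rep q := fun q hq => by
    have : rep q ∈ Set.range ((s.image rep).orderEmbOfFin htcard) := by
      rw [Finset.range_orderEmbOfFin]
      exact_mod_cast Finset.mem_image_of_mem rep hq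
    obtain ⟨i, hi⟩ := this
    exact ⟨i, hi⟩
  -- the lifted coordinates
  have hidx : ∀ j : ℤ, (j % (nn:ℤ)).toNat < nn := fun j => by
    have h1 := Int.emod_nonneg j hnn0.ne'
    have h2 := Int.emod_lt_of_pos j hnn0
    omega
  set w : ℤ → ℝ := fun j => V ⟨(j % (nn:ℤ)).toNat, hidx j⟩ + (2*Real.pi) * ((j / (nn:ℤ) : ℤ) : ℝ) with hwdef
  have w_fin : ∀ i : Fin nn, w i = V i := fun i => by
    have h1 : ((i:ℕ):ℤ) % (nn:ℤ) = (i:ℕ) := Int.emod_eq_of_lt (by positivity) (by exact_mod_cast i.2)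
    have h2 : ((i:ℕ):ℤ) / (nn:ℤ) = 0 := Int.ediv_eq_zero_of_lt (by positivity) (by exact_mod_cast i.2)
    simp only [hwdef, h1, h2]
    simp
  have w_per : ∀ (j c : ℤ), w (j + c * nn) = w j + (2*Real.pi) * c := fun j c => by
    have h1 : (j + c * (nn:ℤ)) % nn = j % nn := Int.add_mul_emod_self_right _ _ _
    have h2 : (j + c * (nn:ℤ)) / nn = j / nn + c := Int.add_mul_ediv_right j c hnn0.ne'
    simp only [hwdef, h1, h2]
    push_cast; ring
  have w_mono : StrictMono w := by
    apply strictMono_int_of_lt_succ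
    intro j
    rcases lt_or_eq_of_le (show j % (nn:ℤ) ≤ nn - 1 by
        have := Int.emod_lt_of_pos j hnn0; omega) with hr | hr
    · have hje : j + 1 = (j % nn + 1) + (j / (nn:ℤ)) * nn := by
        have := Int.mul_ediv_add_emod j (nn:ℤ); linarith
      have h1 : (j + 1) % (nn:ℤ) = j % nn + 1 := by
        rw [hje, Int.add_mul_emod_self_right,
          Int.emod_eq_of_lt (by have := Int.emod_nonneg j hnn0.ne'; omega) (by omega)]
      have h2 : (j + 1) / (nn:ℤ) = j / nn := by
        rw [hje, Int.add_mul_ediv_right _ _ hnn0.ne',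
          Int.ediv_eq_zero_of_lt (by have := Int.emod_nonneg j hnn0.ne'; omega) (by omega), zero_add]
      simp only [hwdef, h1, h2]
      have : (j % (nn:ℤ)).toNat < (j % (nn:ℤ) + 1).toNat := by
        have := Int.emod_nonneg j hnn0.ne'; omega
      have := hVmono (show (⟨(j % (nn:ℤ)).toNat, hidx j⟩ : Fin nn) < ⟨(j % (nn:ℤ) + 1).toNat, h1 ▸ hidx (j+1)⟩ from this)
      simp only [gt_iff_lt, add_lt_add_iff_right]
      convert this using 3 <;> rw [h1]
    · have hje : j + 1 = 0 + (j / (nn:ℤ) + 1) * nn := by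
        have := Int.mul_ediv_add_emod j (nn:ℤ); linarith
      have h1 : (j + 1) % (nn:ℤ) = 0 := by
        rw [hje, Int.add_mul_emod_self_right, Int.zero_emod]
      have h2 : (j + 1) / (nn:ℤ) = j / nn + 1 := by
        rw [hje, Int.add_mul_ediv_right _ _ hnn0.ne', Int.zero_ediv, zero_add]
      simp only [hwdef, h1, h2]
      have hlt : V ⟨(j % (nn:ℤ)).toNat, hidx j⟩ < 2*Real.pi := (hV_Ico _).2
      have hge : 0 ≤ V ⟨(0:ℕ), by omega⟩ := (hV_Ico _).1
      have hcast : ((j / (nn:ℤ) + 1 : ℤ):ℝ) = (j / (nn:ℤ) : ℤ) + 1 := by push_cast; ring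
      rw [hcast]
      have hVeq' : V ⟨((0:ℤ)).toNat, by simpa using hidx 0⟩ = V ⟨(0:ℕ), by omega⟩ := rfl
      rw [hVeq']
      linarith
  have w_per1 : ∀ j : ℤ, w (j + nn) = w j + 2*Real.pi := fun j => by
    have := w_per j 1
    rw [one_mul, Int.cast_one, mul_one] at this
    exact this
  -- chunk C
  set E : ℤ → AddCircle (2*Real.pi) := fun j => ((w j : ℝ) : AddCircle (2*Real.pi)) with hEdef
  have hmul_zero : ∀ c : ℤ, (((2*Real.pi) * c : ℝ) : AddCircle (2*Real.pi)) = 0 := fun c => by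
    rw [QuotientAddGroup.eq_zero_iff, AddSubgroup.mem_zmultiples_iff]
    exact ⟨c, by rw [zsmul_eq_mul]; ring⟩
  have hE_mem : ∀ j, E j ∈ s := fun j => by
    have : E j = ((V ⟨(j % (nn:ℤ)).toNat, hidx j⟩ : ℝ) : AddCircle (2*Real.pi)) := by
      simp only [hEdef, hwdef]
      rw [QuotientAddGroup.mk_add, hmul_zero, add_zero]
    rw [this]; exact hV_mem _
  have hE_shift : ∀ j c : ℤ, E (j + c * nn) = E j := fun j c => by
    simp only [hEdef]
    rw [w_per, QuotientAddGroup.mk_add, hmul_zero, add_zero]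
  have w_window : ∀ i j : ℤ, i ≤ j → j ≤ i + nn → 0 ≤ w j - w i ∧ w j - w i ≤ 2*Real.pi := by
    intro i j h1 h2
    constructor
    · linarith [w_mono.monotone h1]
    · have := w_mono.monotone h2
      rw [w_per1 i] at this
      linarith
  have dist_E : ∀ i j : ℤ, i ≤ j → j ≤ i + nn →
      dist (E i) (E j) = min (w j - w i) (2*Real.pi - (w j - w i)) := by
    intro i j h1 h2
    obtain ⟨hw1, hw2⟩ := w_window i j h1 h2
    have := dist_mk' (w i) (w j) (by linarith) (by linarith)
    rw [hEdef]
    convert this using 2 <;> ring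
  have window_inj : ∀ i j j' : ℤ, i ≤ j → j < i + nn → i ≤ j' → j' < i + nn →
      E j = E j' → j = j' := by
    have aux : ∀ i j j' : ℤ, i ≤ j → j < i + nn → i ≤ j' → j' < i + nn → j ≤ j' →
        E j = E j' → j = j' := by
      intro i j j' h1 h2 h3 h4 hle heq
      have hw1 : 0 ≤ w j' - w j := by linarith [w_mono.monotone hle]
      have hw2 : w j' - w j < 2*Real.pi := by
        have := w_mono.monotone h1
        have h5 := w_mono (show j' < i + nn by omega)
        rw [w_per1 i] at h5
        linarith
      have : ((w j' - w j : ℝ) : AddCircle (2*Real.pi)) = 0 := by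
        rw [QuotientAddGroup.mk_sub]
        simp only [hEdef] at heq
        rw [heq, sub_self]
      rw [QuotientAddGroup.eq_zero_iff, AddSubgroup.mem_zmultiples_iff] at this
      obtain ⟨z, hz⟩ := this
      rw [zsmul_eq_mul] at hz
      have hz0 : z = 0 := by
        rcases lt_trichotomy z 0 with hc | hc | hc
        · have hz1 : z ≤ -1 := by omega
          have : (z:ℝ) ≤ -1 := by exact_mod_cast hz1
          nlinarith [Real.pi_pos]
        · exact hc
        · have hz1 : 1 ≤ z := hc
          have : (1:ℝ) ≤ z := by exact_mod_cast hz1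
          nlinarith [Real.pi_pos]
      rw [hz0] at hz
      simp at hz
      exact w_mono.injective (by linarith : w j = w j')
    intro i j j' h1 h2 h3 h4 heq
    rcases le_total j j' with hle | hle
    · exact aux i j j' h1 h2 h3 h4 hle heq
    · exact (aux i j' j h3 h4 h1 h2 hle heq.symm).symm
  have window_surj : ∀ i : ℤ, ∀ q ∈ s, ∃ j, i ≤ j ∧ j < i + nn ∧ E j = q := by
    intro i q hq
    obtain ⟨i₀, hi₀⟩ := hV_surj q hq
    have hEi₀ : E (i₀ : ℤ) = q := by
      simp only [hEdef]
      rw [w_fin i₀, hi₀, hrep_mk]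
    set a : ℤ := i - (i₀:ℤ) + nn - 1 with hadef
    set c : ℤ := a / nn with hcdef
    have hdm := Int.mul_ediv_add_emod a (nn:ℤ)
    have hr1 := Int.emod_nonneg a hnn0.ne'
    have hr2 := Int.emod_lt_of_pos a hnn0
    have hm : c * (nn:ℤ) = (nn:ℤ) * c := mul_comm _ _
    refine ⟨(i₀:ℤ) + c * nn, by linarith, by linarith, ?_⟩
    rw [hE_shift, hEi₀]
  have hE_per1 : ∀ j : ℤ, E (j + nn) = E j := fun j => by
    have := hE_shift j 1; rw [one_mul] at this; exact this
  -- chunk D : the far-point pairing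
  have hexm : ∀ i : ℤ, ∃ j : ℤ, i < j ∧ j < i + nn ∧ tb < dist (E i) (E j) := by
    intro i
    obtain ⟨y, hy, hdy⟩ := hfar (E i) (hE_mem i)
    obtain ⟨j, hj1, hj2, hj3⟩ := window_surj i y hy
    have hne : i ≠ j := by
      rintro rfl
      rw [← hj3, dist_self] at hdy
      linarith
    exact ⟨j, lt_of_le_of_ne hj1 hne, hj2, by rw [hj3]; exact hdy⟩
  choose m hm1 hm2 hm3 using hexm
  have muniq : ∀ i j : ℤ, i < j → j < i + nn → tb < dist (E i) (E j) → j = m i := by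
    intro i j h1 h2 h3
    by_contra hne
    have hEne : E j ≠ E (m i) := fun hc =>
      hne (window_inj i j (m i) h1.le h2 (hm1 i).le (hm2 i) hc)
    have := hmin (E i) (hE_mem i) (E j) (hE_mem j) (E (m i)) (hE_mem (m i)) hEne
    have h4 := lt_min h3 (hm3 i)
    exact absurd this (not_le.mpr h4)
  have mnear : ∀ i j : ℤ, i < j → j < i + nn → j ≠ m i → dist (E i) (E j) ≤ tb := by
    intro i j h1 h2 hne
    by_contra hgt
    exact hne (muniq i j h1 h2 (not_le.mp hgt))
  have minv : ∀ i : ℤ, m (m i) = i + nn := by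
    intro i
    have hd : tb < dist (E (m i)) (E (i + nn)) := by
      rw [hE_per1 i, dist_comm]; exact hm3 i
    exact (muniq (m i) (i+nn) (hm2 i) (by linarith [hm1 i]) hd).symm
  have mper : ∀ i : ℤ, m (i + nn) = m i + nn := by
    intro i
    have hd : tb < dist (E (i + nn)) (E (m i + nn)) := by
      rw [hE_per1 i, hE_per1 (m i)]; exact hm3 i
    exact (muniq (i+nn) (m i + nn) (by linarith [hm1 i]) (by linarith [hm2 i]) hd).symm
  have cross : ∀ i j q : ℤ, i < j → j < q → q < m i → dist (E j) (E q) ≤ tb := by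
    intro i j q h1 h2 h3
    have hmi1 := hm1 i
    have hmi2 := hm2 i
    have hdmi := hm3 i
    rw [dist_E i (m i) hmi1.le hmi2.le] at hdmi
    have hp2 : tb < 2*Real.pi - (w (m i) - w i) := lt_of_lt_of_le hdmi (min_le_right _ _)
    have hq : dist (E i) (E q) ≤ tb := mnear i q (by omega) (by omega) (by omega)
    rw [dist_E i q (by omega) (by omega)] at hq
    have hmq : w q < w (m i) := w_mono h3
    have hv_le : w q - w i ≤ tb := by
      rcases min_le_iff.mp hq with hc | hc
      · exact hc
      · linarith
    rw [dist_E j q h2.le (by omega : q ≤ j + nn)]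
    have hu : w i < w j := w_mono h1
    exact le_trans (min_le_left _ _) (by linarith)
  have hcross : ∀ i j : ℤ, i < j → j < m i → m i < m j ∧ m j < i + nn := by
    intro i j h1 h2
    have hb2 := hm2 i
    have hb3 := hm1 j
    have hb4 := hm2 j
    have hne1 : m j ≠ m i := by
      intro hc
      have h' := minv j
      rw [hc, minv i] at h'
      omega
    have hne2 : m j ≠ i + nn := by
      intro hc
      have h' := minv j
      rw [hc, mper i] at h'
      omega
    constructor
    · by_contra hle
      push_neg at hle
      have hlt : m j < m i := lt_of_le_of_ne hle hne1
      have := cross i j (m j) h1 hb3 hlt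
      linarith [hm3 j]
    · by_contra hle
      push_neg at hle
      have hlt : i + (nn:ℤ) < m j := lt_of_le_of_ne hle (Ne.symm hne2)
      have hq1 : i < m j - nn := by omega
      have hq2 : m j - nn < j := by omega
      have hd : tb < dist (E (m j - nn)) (E j) := by
        have hEq : E (m j - nn) = E (m j) := by
          have := hE_per1 (m j - nn)
          rw [sub_add_cancel] at this
          exact this.symm
        rw [hEq, dist_comm]
        exact hm3 j
      have := cross i (m j - nn) j hq1 hq2 h2
      linarith
  -- chunk E : counting, m i = i + k + 1
  have m_card : ∀ i : ℤ, m i ≤ i + (k:ℤ) + 1 := by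
    intro i
    have hmaps : ∀ j ∈ Finset.Ioo i (m i), m j ∈ Finset.Ioo (m i) (i + nn) := by
      intro j hj
      rw [Finset.mem_Ioo] at hj ⊢
      exact hcross i j hj.1 hj.2
    have hinj : Set.InjOn m (Finset.Ioo i (m i)) := by
      intro a _ b _ hab
      have h' := minv a
      rw [hab, minv b] at h'
      omega
    have hcard := Finset.card_le_card_of_injOn m hmaps hinj
    rw [Int.card_Ioo, Int.card_Ioo] at hcard
    have h1 := hm1 i
    have h2 := hm2 i
    omega
  have m_eq : ∀ i : ℤ, m i = i + (k:ℤ) + 1 := by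
    intro i
    have h1 := m_card i
    have h2 := m_card (m i)
    rw [minv i] at h2
    omega
  -- chunk F : key inequality and summation
  have key : ∀ i : ℤ, w (i + (k:ℤ)) - w i ≤ tb := by
    intro i
    have hmeq := m_eq i
    have h1 : i < i + (k:ℤ) := by omega
    have h2 : i + (k:ℤ) < i + nn := by omega
    have hd := mnear i (i + (k:ℤ)) h1 h2 (by omega)
    rw [dist_E i (i + (k:ℤ)) h1.le (by omega)] at hd
    have hdmi := hm3 i
    rw [dist_E i (m i) (hm1 i).le (hm2 i).le] at hdmi
    have hp2 : tb < 2*Real.pi - (w (m i) - w i) := lt_of_lt_of_le hdmi (min_le_right _ _)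
    have hmono : w (i + (k:ℤ)) < w (m i) := w_mono (by omega)
    rcases min_le_iff.mp hd with hc | hc
    · exact hc
    · linarith
  have S_shift : ∀ c : ℕ, ∑ i ∈ Finset.range nn, w ((i:ℤ) + (c:ℤ))
      = (∑ i ∈ Finset.range nn, w (i:ℤ)) + (c:ℝ) * (2*Real.pi) := by
    intro c
    induction c with
    | zero => simp
    | succ c ih =>
      have hshift : ∑ i ∈ Finset.range nn, w ((i:ℤ) + (c+1:ℕ))
          = ∑ i ∈ Finset.range nn, w (((i+1:ℕ):ℤ) + (c:ℤ)) := by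
        apply Finset.sum_congr rfl
        intro i _
        congr 1
        push_cast
        ring
      rw [hshift]
      have h1 : ∑ i ∈ Finset.range (nn+1), w ((i:ℕ) + (c:ℤ))
          = (∑ i ∈ Finset.range nn, w (((i+1:ℕ):ℤ) + (c:ℤ))) + w (((0:ℕ):ℤ) + c) :=
        Finset.sum_range_succ' (fun i : ℕ => w ((i:ℤ) + c)) nn
      have h2 : ∑ i ∈ Finset.range (nn+1), w ((i:ℕ) + (c:ℤ))
          = (∑ i ∈ Finset.range nn, w ((i:ℤ) + (c:ℤ))) + w ((nn:ℤ) + c) :=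
        Finset.sum_range_succ (fun i : ℕ => w ((i:ℤ) + c)) nn
      have h3 : w ((nn:ℤ) + (c:ℤ)) = w (((0:ℕ):ℤ) + (c:ℤ)) + 2*Real.pi := by
        rw [add_comm ((nn:ℤ)) (c:ℤ), w_per1 (c:ℤ)]
        norm_num
      have h4 : ∑ i ∈ Finset.range nn, w (((i+1:ℕ):ℤ) + (c:ℤ))
          = (∑ i ∈ Finset.range nn, w ((i:ℤ) + (c:ℤ))) + 2*Real.pi := by
        rw [h1] at h2
        linarith
      rw [h4, ih]
      push_cast
      ring
  have h1 : ∑ i ∈ Finset.range nn, (w ((i:ℤ) + (k:ℤ)) - w (i:ℤ)) = (k:ℝ) * (2*Real.pi) := by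
    rw [Finset.sum_sub_distrib, S_shift k]
    ring
  have h2 : ∑ i ∈ Finset.range nn, (w ((i:ℤ) + (k:ℤ)) - w (i:ℤ)) ≤ ∑ _i ∈ Finset.range nn, tb :=
    Finset.sum_le_sum (fun i _ => key (i:ℤ))
  rw [Finset.sum_const, Finset.card_range, h1] at h2
  have h3 : (k:ℝ) * (2*Real.pi) ≤ (nn:ℝ) * tb := by
    rw [nsmul_eq_mul] at h2
    exact h2
  have hnnr : (nn:ℝ) = 2*(k:ℝ)+2 := by rw [hnn]; push_cast; ring
  rw [div_le_iff₀ (by positivity : (0:ℝ) < (k:ℝ)+1)]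
  rw [hnnr] at h3
  linarith
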